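/- arXiv:1503.03393 — 3 statements merged into one kernel-verified Lean document; each statement's English description precedes it below -/
import Mathlib

section
/- Let α_n : [0,∞) → [0,∞) be monotone nondecreasing random processes, let β_n(t) = E[α_n(t)], and let η_n ≥ 0 be random variables such that β_n(η_n) → 0 in probability. Then α_n(η_n) → 0 in probability. -/
open MeasureTheory Filter

noncomputable section

/-- Convergence in probability to a constant. -/
def TendstoInProb {Ω : Type*} [MeasurableSpace Ω] (μ : Measure Ω)
    (X : ℕ → Ω → ℝ) (c : ℝ) : Prop :=
  ∀ ε : ℝ, 0 < ε → Tendsto (fun n => μ {ω | ε ≤ |X n ω - c|}) atTop (nhds 0)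

/-- Markov-type bound. -/
lemma markov_bound {Ω : Type*} [MeasurableSpace Ω] (μ : Measure Ω) [IsProbabilityMeasure μ]
    {f : Ω → ℝ} (hnn : ∀ ω, 0 ≤ f ω) (hint : Integrable f μ) {ε θ : ℝ} (hε : 0 < ε)
    (hθ : (∫ ω, f ω ∂μ) < θ) : μ {ω | ε ≤ f ω} ≤ ENNReal.ofReal (θ / ε) := by
  have h := mul_meas_ge_le_integral_of_nonneg (ae_of_all μ hnn) hint ε
  have hfin : μ {ω | ε ≤ f ω} ≠ ⊤ := measure_ne_top μ _
  have h2 : (μ {ω | ε ≤ f ω}).toReal ≤ θ / ε := by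
    rw [le_div_iff₀ hε, mul_comm]
    exact h.trans hθ.le
  calc μ {ω | ε ≤ f ω} = ENNReal.ofReal ((μ {ω | ε ≤ f ω}).toReal) :=
        (ENNReal.ofReal_toReal hfin).symm
    _ ≤ ENNReal.ofReal (θ / ε) := ENNReal.ofReal_le_ofReal h2

/-- Key estimate: the probability that `f ω (g ω) ≥ ε` while the mean at `g ω` is `< θ`
is at most `θ / ε`. -/
lemma key_bound {Ω : Type*} [MeasurableSpace Ω] (μ : Measure Ω) [IsProbabilityMeasure μ]
    (f : Ω → ℝ → ℝ) (g : Ω → ℝ)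
    (hmono : ∀ ω, Monotone (f ω)) (hnn : ∀ ω t, 0 ≤ f ω t)
    (hint : ∀ t, Integrable (fun ω => f ω t) μ) {ε θ : ℝ} (hε : 0 < ε) :
    μ {ω | ε ≤ f ω (g ω) ∧ (∫ ω', f ω' (g ω) ∂μ) < θ} ≤ ENNReal.ofReal (θ / ε) := by
  set β : ℝ → ℝ := fun t => ∫ ω', f ω' t ∂μ with hβdef
  have hβmono : Monotone β := fun s t hst =>
    integral_mono (hint s) (hint t) (fun ω => hmono ω hst)
  set S : Set ℝ := {t | β t < θ} with hSdef
  have hmarkov : ∀ t ∈ S, μ {ω | ε ≤ f ω t} ≤ ENNReal.ofReal (θ / ε) := fun t ht =>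
    markov_bound μ (fun ω => hnn ω t) (hint t) hε ht
  set B : Set Ω := {ω | ε ≤ f ω (g ω) ∧ β (g ω) < θ} with hBdef
  have hgS : ∀ ω ∈ B, g ω ∈ S := fun ω hω => hω.2
  rcases Set.eq_empty_or_nonempty S with hSe | hSne
  · have : B = ∅ := by
      ext ω; simp only [Set.mem_empty_iff_false, iff_false]
      intro hω
      exact absurd (hgS ω hω) (by rw [hSe]; exact Set.notMem_empty _)
    rw [this]
    simp
  by_cases hbdd : BddAbove S
  · set s := sSup S with hs
    by_cases hsS : s ∈ S
    · have hsub : B ⊆ {ω | ε ≤ f ω s} := by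
        intro ω hω
        have h1 : g ω ≤ s := le_csSup hbdd (hgS ω hω)
        exact le_trans hω.1 (hmono ω h1)
      exact le_trans (measure_mono hsub) (hmarkov s hsS)
    · obtain ⟨u, hu_mono, hu_tend, hu_mem⟩ := exists_seq_tendsto_sSup hSne hbdd
      have hsub : B ⊆ ⋃ k, {ω | ε ≤ f ω (u k)} := by
        intro ω hω
        have hlt : g ω < s := lt_of_le_of_ne (le_csSup hbdd (hgS ω hω))
          (fun h => hsS (h ▸ hgS ω hω))
        obtain ⟨k, hk⟩ := ((tendsto_order.1 hu_tend).1 _ hlt).exists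
        exact Set.mem_iUnion.2 ⟨k, le_trans hω.1 (hmono ω hk.le)⟩
      have hdir : Directed (· ⊆ ·) (fun k => {ω | ε ≤ f ω (u k)}) := by
        intro i j
        refine ⟨max i j, fun ω hω => le_trans hω (hmono ω (hu_mono (le_max_left i j))),
          fun ω hω => le_trans hω (hmono ω (hu_mono (le_max_right i j)))⟩
      calc μ B ≤ μ (⋃ k, {ω | ε ≤ f ω (u k)}) := measure_mono hsub
        _ = ⨆ k, μ {ω | ε ≤ f ω (u k)} := hdir.measure_iUnion
        _ ≤ ENNReal.ofReal (θ / ε) := iSup_le fun k => hmarkov _ (hu_mem k)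
  · have hchoice : ∀ k : ℕ, ∃ t ∈ S, (k : ℝ) < t := by
      intro k
      by_contra h
      push_neg at h
      exact hbdd ⟨k, fun t ht => h t ht⟩
    choose u hu_mem hu_gt using hchoice
    have hsub : B ⊆ ⋃ k, {ω | ε ≤ f ω (u k)} := by
      intro ω hω
      refine Set.mem_iUnion.2 ⟨⌈g ω⌉₊, le_trans hω.1 (hmono ω ?_)⟩
      exact le_trans (Nat.le_ceil _) (hu_gt _).le
    have hdir : Directed (· ⊆ ·) (fun k => {ω | ε ≤ f ω (u k)}) := by
      intro i j
      refine ⟨⌈max (u i) (u j)⌉₊, fun ω hω => le_trans hω (hmono ω ?_),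
        fun ω hω => le_trans hω (hmono ω ?_)⟩
      · exact le_trans (le_trans (le_max_left _ _) (Nat.le_ceil _)) (hu_gt _).le
      · exact le_trans (le_trans (le_max_right _ _) (Nat.le_ceil _)) (hu_gt _).le
    calc μ B ≤ μ (⋃ k, {ω | ε ≤ f ω (u k)}) := measure_mono hsub
      _ = ⨆ k, μ {ω | ε ≤ f ω (u k)} := hdir.measure_iUnion
      _ ≤ ENNReal.ofReal (θ / ε) := iSup_le fun k => hmarkov _ (hu_mem k)

/-- Lemma 5.1: if `α n ω : [0,∞) → [0,∞)` are monotone nondecreasing random processes,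
`β n t = E[α n · t]`, and `β n (η n) → 0` in probability for nonnegative random variables
`η n`, then `α n (η n) → 0` in probability. -/
theorem stmt_0 {Ω : Type*} [MeasurableSpace Ω] (μ : Measure Ω) [IsProbabilityMeasure μ]
    (α : ℕ → Ω → ℝ → ℝ) (η : ℕ → Ω → ℝ)
    (hmono : ∀ n ω, Monotone (α n ω))
    (hnonneg : ∀ n ω t, 0 ≤ α n ω t)
    (hηnonneg : ∀ n ω, 0 ≤ η n ω)
    (hint : ∀ n t, Integrable (fun ω => α n ω t) μ)
    (hβ : TendstoInProb μ (fun n ω => ∫ ω', α n ω' (η n ω) ∂μ) 0) :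
    TendstoInProb μ (fun n ω => α n ω (η n ω)) 0 := by
  intro ε hε
  rw [ENNReal.tendsto_nhds_zero]
  intro c hc
  set r : ENNReal := min 1 (c / 2) with hr
  have hr0 : 0 < r := lt_min one_pos (ENNReal.half_pos hc.ne')
  have hrtop : r ≠ ⊤ := ne_top_of_le_ne_top ENNReal.one_ne_top (min_le_left _ _)
  have hrt : 0 < r.toReal := ENNReal.toReal_pos hr0.ne' hrtop
  set θ : ℝ := ε * r.toReal with hθ
  have hθ0 : 0 < θ := mul_pos hε hrt
  have hof : ENNReal.ofReal (θ / ε) = r := by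
    rw [hθ, mul_comm, mul_div_assoc, div_self hε.ne', mul_one, ENNReal.ofReal_toReal hrtop]
  have h2 := (ENNReal.tendsto_nhds_zero.1 (hβ θ hθ0)) (c / 2) (ENNReal.half_pos hc.ne')
  filter_upwards [h2] with n hn
  have hsub : {ω | ε ≤ |α n ω (η n ω) - 0|} ⊆
      {ω | θ ≤ |(∫ ω', α n ω' (η n ω) ∂μ) - 0|} ∪
      {ω | ε ≤ α n ω (η n ω) ∧ (∫ ω', α n ω' (η n ω) ∂μ) < θ} := by
    intro ω hω
    simp only [sub_zero] at hω ⊢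
    rw [Set.mem_setOf_eq, abs_of_nonneg (hnonneg n ω _)] at hω
    by_cases hcase : θ ≤ (∫ ω', α n ω' (η n ω) ∂μ)
    · left
      rw [Set.mem_setOf_eq, abs_of_nonneg (integral_nonneg (fun ω' => hnonneg n ω' _))]
      exact hcase
    · right
      exact ⟨hω, lt_of_not_ge hcase⟩
  calc μ {ω | ε ≤ |α n ω (η n ω) - 0|}
      ≤ μ ({ω | θ ≤ |(∫ ω', α n ω' (η n ω) ∂μ) - 0|} ∪
        {ω | ε ≤ α n ω (η n ω) ∧ (∫ ω', α n ω' (η n ω) ∂μ) < θ}) := measure_mono hsub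
    _ ≤ μ {ω | θ ≤ |(∫ ω', α n ω' (η n ω) ∂μ) - 0|} +
        μ {ω | ε ≤ α n ω (η n ω) ∧ (∫ ω', α n ω' (η n ω) ∂μ) < θ} := measure_union_le _ _
    _ ≤ c / 2 + ENNReal.ofReal (θ / ε) := add_le_add hn
        (key_bound μ (α n) (η n) (hmono n) (hnonneg n) (hint n) hε)
    _ = c / 2 + r := by rw [hof]
    _ ≤ c / 2 + c / 2 := add_le_add_right (min_le_right _ _) _
    _ = c := ENNReal.add_halves c
end
end

section
/- Suppose J_n ≠ 0, I_n > 0, |J_n|/√I_n → ∞, τ̄_n : [0,∞] → [0,∞] are monotone nondecreasing functions with lim_{δ→0} limsup_{n→∞} τ̄_n(δ) = 0, and u_n* are random variables with (|J_n|/√I_n)·|u_n*|·τ̄_n(|u_n*|) → 0 in probability. Then τ̄_n(|u_n*|) → 0 in probability. -/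
open MeasureTheory Filter
open scoped ENNReal

noncomputable section

/-- If `J n ≠ 0`, `I n > 0`, `|J n|/√(I n) → ∞`, the monotone functions `τ̄ n` satisfy
`lim_{δ→0⁺} limsup_n τ̄ n δ = 0`, and `(|J n|/√(I n))·|u n|·τ̄ n (|u n|) → 0` in probability,
then `τ̄ n (|u n|) → 0` in probability. -/
theorem stmt_4 {Ω : Type*} [MeasurableSpace Ω] (μ : Measure Ω) [IsProbabilityMeasure μ]
    (I J : ℕ → ℝ) (τ : ℕ → ℝ → ℝ≥0∞) (u : ℕ → Ω → ℝ)
    (hI : ∀ n, 0 < I n) (hJ : ∀ n, J n ≠ 0)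
    (hJI : Tendsto (fun n => |J n| / Real.sqrt (I n)) atTop atTop)
    (hmono : ∀ n, Monotone (τ n))
    (hlimsup : Tendsto (fun δ : ℝ => Filter.limsup (fun n => τ n δ) atTop)
      (nhdsWithin 0 (Set.Ioi 0)) (nhds 0))
    (hprob : ∀ ε : ℝ≥0∞, 0 < ε →
      Tendsto (fun n => μ {ω | ε ≤
        ENNReal.ofReal (|J n| / Real.sqrt (I n) * |u n ω|) * τ n (|u n ω|)}) atTop (nhds 0)) :
    ∀ ε : ℝ≥0∞, 0 < ε →
      Tendsto (fun n => μ {ω | ε ≤ τ n (|u n ω|)}) atTop (nhds 0) := by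
  intro ε hε
  set ε' : ℝ≥0∞ := min ε 1 with hε'def
  have hε' : 0 < ε' := lt_min hε zero_lt_one
  have hε'ε : ε' ≤ ε := min_le_left _ _
  -- pick δ > 0 with limsup τ n δ < ε'
  obtain ⟨δ, hδlim, hδpos⟩ :=
    ((hlimsup.eventually (gt_mem_nhds hε')).and self_mem_nhdsWithin).exists
  have hδpos : (0:ℝ) < δ := hδpos
  have hτδ : ∀ᶠ n in atTop, τ n δ < ε' := eventually_lt_of_limsup_lt hδlim
  have hM : ∀ᶠ n in atTop, 1/δ ≤ |J n| / Real.sqrt (I n) := hJI.eventually_ge_atTop _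
  have hle : ∀ᶠ n in atTop, μ {ω | ε ≤ τ n (|u n ω|)} ≤
      μ {ω | ε ≤ ENNReal.ofReal (|J n| / Real.sqrt (I n) * |u n ω|) * τ n (|u n ω|)} := by
    filter_upwards [hτδ, hM] with n hτn hMn
    apply measure_mono
    intro ω hω
    have hω : ε ≤ τ n (|u n ω|) := hω
    have hu : δ < |u n ω| := by
      by_contra h
      push_neg at h
      exact absurd (hω.trans (hmono n h)) (not_le.2 (hτn.trans_le hε'ε))
    have h1 : (1:ℝ) ≤ |J n| / Real.sqrt (I n) * |u n ω| := by
      have hMpos : 0 < |J n| / Real.sqrt (I n) := lt_of_lt_of_le (by positivity) hMn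
      calc (1:ℝ) = (1/δ) * δ := by field_simp
        _ ≤ (|J n| / Real.sqrt (I n)) * |u n ω| := by
            apply mul_le_mul hMn hu.le hδpos.le hMpos.le
    have : (1:ℝ≥0∞) ≤ ENNReal.ofReal (|J n| / Real.sqrt (I n) * |u n ω|) := by
      rw [← ENNReal.ofReal_one]
      exact ENNReal.ofReal_le_ofReal h1
    show ε ≤ _
    calc ε ≤ τ n (|u n ω|) := hω
      _ = 1 * τ n (|u n ω|) := (one_mul _).symm
      _ ≤ _ := mul_le_mul_left this _
  exact tendsto_of_tendsto_of_tendsto_of_le_of_le' tendsto_const_nhds (hprob ε hε)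
    (Eventually.of_forall fun n => zero_le) hle
end
end

section
/- Under the regression model X_{ni} = f(θ, z_{n:i}) + ε_{ni} with E ε_{ni} = 0 and E ε_{ni}² < ∞, assume: T(t) = ∫_c^d f(t,z) dz is strictly monotone and continuous on (a,b), the inverse T^{−1} is Hölder with exponent p ∈ (0,1] and constant K; α_n^{1/p} d_n → 0 where d_n² := Σ_i (Δz_{ni})² E ε_{ni}²; α_n^{1/p} Σ_i ω_{f,θ}(Δz_{ni}) Δz_{ni} → 0; and α_n^{1/p} ∫_{z_{n:n}}^d f(θ,z) dz → 0. Then the estimator θ_n* := T^{−1}(Σ_i Δz_{ni} X_{ni}) satisfies α_n(θ_n* − θ) → 0 in probability. -/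
open MeasureTheory Filter ProbabilityTheory

noncomputable section

lemma zchain (z : ℕ → ℝ) (n : ℕ) (h : ∀ i < n, z i ≤ z (i+1)) :
    ∀ i j, i ≤ j → j ≤ n → z i ≤ z j := by
  intro i j hij hjn
  induction j with
  | zero => simp [Nat.le_zero.mp hij]
  | succ k ih =>
    rcases Nat.eq_or_lt_of_le hij with rfl | h'
    · exact le_refl _
    · exact (ih (Nat.lt_succ_iff.mp h') (by omega)).trans (h k (by omega))


/-- Theorem 3.5, first part: consistency of the Riemann-sum-based preliminary estimator
`θ* n = T⁻¹(Σ_i Δz_{ni} X_{ni})` in the regression model `X_{ni} = f(θ, z_{n:i}) + ε_{ni}`.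
Under strict monotonicity/continuity of `T`, Hölder continuity of `T⁻¹` with exponent
`p ∈ (0,1]`, and the rate conditions `α_n^{1/p} d_n → 0`,
`α_n^{1/p} Σ_i ω_{f,θ}(Δz_{ni}) Δz_{ni} → 0`, `α_n^{1/p} ∫_{z_{n:n}}^d f(θ,z)dz → 0`,
the estimator satisfies `α_n (θ* n − θ) → 0` in probability. -/
theorem stmt_9 {Ω : Type*} [MeasurableSpace Ω] (μ : Measure Ω) [IsProbabilityMeasure μ]
    (a b c d θ : ℝ) (hθ : θ ∈ Set.Ioo a b) (hcd : c < d)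
    (f : ℝ → ℝ → ℝ) (T Tinv : ℝ → ℝ) (K p : ℝ) (hp0 : 0 < p) (hp1 : p ≤ 1)
    (z : ℕ → ℕ → ℝ) (ε : ℕ → ℕ → Ω → ℝ) (αn : ℕ → ℝ) (ωf : ℝ → ℝ)
    (hz0 : ∀ n, z n 0 = c)
    (hzmono : ∀ n, ∀ i < n, z n i ≤ z n (i + 1)) (hzlt : ∀ n, z n n < d)
    (hαpos : ∀ n, 0 < αn n)
    (hTmono : StrictMonoOn T (Set.Ioo a b)) (hTcont : ContinuousOn T (Set.Ioo a b))
    (hTθ : T θ = ∫ t in Set.Ico c d, f θ t)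
    (hTinvT : Tinv (T θ) = θ)
    (hHolder : ∀ s₁ s₂ : ℝ, |Tinv s₁ - Tinv s₂| ≤ K * |s₁ - s₂| ^ p)
    (hεmeas : ∀ n i, Measurable (ε n i))
    (hεmean : ∀ n i, ∫ ω, ε n i ω ∂μ = 0)
    (hεL2 : ∀ n i, MemLp (ε n i) 2 μ)
    (hεindep : ∀ n, iIndepFun (fun i : Fin n => ε n (i + 1)) μ)
    (hω : ∀ t₁ ∈ Set.Ico c d, ∀ t₂ ∈ Set.Ico c d, ∀ Δ : ℝ,
      |t₁ - t₂| ≤ Δ → |f θ t₁ - f θ t₂| ≤ ωf Δ)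
    (hintf : IntegrableOn (f θ) (Set.Ico c d))
    (hd2 : Tendsto (fun n => αn n ^ ((1:ℝ)/p) *
      Real.sqrt (∑ i ∈ Finset.range n,
        (z n (i + 1) - z n i) ^ 2 * ∫ ω, (ε n (i + 1) ω) ^ 2 ∂μ)) atTop (nhds 0))
    (hωsum : Tendsto (fun n => αn n ^ ((1:ℝ)/p) *
      ∑ i ∈ Finset.range n, ωf (z n (i + 1) - z n i) * (z n (i + 1) - z n i)) atTop (nhds 0))
    (htail : Tendsto (fun n => αn n ^ ((1:ℝ)/p) *
      ∫ t in Set.Ico (z n n) d, f θ t) atTop (nhds 0)) :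
    ∀ e : ℝ, 0 < e → Tendsto (fun n => μ {ω | e ≤
      |αn n * (Tinv (∑ i ∈ Finset.range n,
        (z n (i + 1) - z n i) * (f θ (z n (i + 1)) + ε n (i + 1) ω)) - θ)|}) atTop (nhds 0) := by
  intro e he
  -- trivial case K ≤ 0
  rcases le_or_gt K 0 with hK | hK
  · have hconst : ∀ s, Tinv s = θ := by
      intro s
      have h1 := hHolder s (T θ)
      have h2 : K * |s - T θ| ^ p ≤ 0 :=
        mul_nonpos_of_nonpos_of_nonneg hK (Real.rpow_nonneg (abs_nonneg _) _)
      have := abs_nonpos_iff.mp (h1.trans h2)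
      rw [hTinvT] at this
      linarith [sub_eq_zero.mp this, hTinvT]
    have : ∀ n, {ω : Ω | e ≤ |αn n * (Tinv (∑ i ∈ Finset.range n,
        (z n (i + 1) - z n i) * (f θ (z n (i + 1)) + ε n (i + 1) ω)) - θ)|} = ∅ := by
      intro n
      ext ω
      simp only [Set.mem_setOf_eq, Set.mem_empty_iff_false, iff_false, not_le, hconst]
      simpa using he
    simp only [this, measure_empty]
    exact tendsto_const_nhds
  -- main case
  set q : ℝ := (1:ℝ)/p with hq
  have hzc : ∀ n i, i ≤ n → c ≤ z n i := by
    intro n i hi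
    rw [← hz0 n]
    exact zchain (z n) n (hzmono n) 0 i (Nat.zero_le _) hi
  have hzn : ∀ n i, i ≤ n → z n i ≤ z n n := fun n i hi =>
    zchain (z n) n (hzmono n) i n hi (le_refl _)
  have hzd : ∀ n i, i ≤ n → z n i < d := fun n i hi => lt_of_le_of_lt (hzn n i hi) (hzlt n)
  have hIsub : ∀ n, ∀ i j : ℕ, i ≤ j → j ≤ n → Set.Ico (z n i) (z n j) ⊆ Set.Ico c d := by
    intro n i j hij hj
    exact Set.Ico_subset_Ico (hzc n i (hij.trans hj)) (hzd n j hj).le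
  have hint' : ∀ n, ∀ i j : ℕ, i ≤ j → j ≤ n → IntegrableOn (f θ) (Set.Ico (z n i) (z n j)) :=
    fun n i j hij hj => hintf.mono_set (hIsub n i j hij hj)
  -- splitting the integral
  have hkey : ∀ n, ∀ m, m ≤ n → ∫ t in Set.Ico c (z n m), f θ t =
      ∑ i ∈ Finset.range m, ∫ t in Set.Ico (z n i) (z n (i+1)), f θ t := by
    intro n m hm
    induction m with
    | zero => simp [hz0 n]
    | succ k ih =>
      rw [Finset.sum_range_succ, ← ih (by omega)]
      have h1 : c ≤ z n k := hzc n k (by omega)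
      have h2 : z n k ≤ z n (k+1) := hzmono n k (by omega)
      rw [← setIntegral_union (Set.Ico_disjoint_Ico_same) measurableSet_Ico
        (by rw [← hz0 n]; exact hint' n 0 k (Nat.zero_le _) (by omega))
        (hint' n k (k+1) (by omega) hm),
        Set.Ico_union_Ico_eq_Ico h1 h2]
  have hsplit : ∀ n, ∫ t in Set.Ico c d, f θ t =
      (∑ i ∈ Finset.range n, ∫ t in Set.Ico (z n i) (z n (i+1)), f θ t) +
      ∫ t in Set.Ico (z n n) d, f θ t := by
    intro n
    rw [← hkey n n (le_refl _),
      ← setIntegral_union (Set.Ico_disjoint_Ico_same) measurableSet_Ico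
        (by rw [← hz0 n]; exact hint' n 0 n (Nat.zero_le _) (le_refl _))
        (hintf.mono_set (Set.Ico_subset_Ico (hzc n n (le_refl _)) (le_refl _))),
      Set.Ico_union_Ico_eq_Ico (hzc n n (le_refl _)) (hzlt n).le]
  -- the deterministic error
  set D : ℕ → ℝ := fun n => (∑ i ∈ Finset.range n,
      (z n (i + 1) - z n i) * f θ (z n (i + 1))) - ∫ t in Set.Ico c d, f θ t with hD
  have hDbound : ∀ n, |D n| ≤ (∑ i ∈ Finset.range n,
      ωf (z n (i + 1) - z n i) * (z n (i + 1) - z n i)) + |∫ t in Set.Ico (z n n) d, f θ t| := by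
    intro n
    have hterm : ∀ i ∈ Finset.range n,
        (z n (i + 1) - z n i) * f θ (z n (i + 1)) -
          (∫ t in Set.Ico (z n i) (z n (i+1)), f θ t) =
        ∫ t in Set.Ico (z n i) (z n (i+1)), (f θ (z n (i + 1)) - f θ t) := by
      intro i hi
      rw [Finset.mem_range] at hi
      have h2 : z n i ≤ z n (i+1) := hzmono n i hi
      rw [integral_sub ((integrableOn_const_iff (C := f θ (z n (i + 1)))).mpr (Or.inr (by
          rw [Real.volume_Ico]; exact ENNReal.ofReal_lt_top)))
        (hint' n i (i+1) (by omega) (by omega)),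
        setIntegral_const, Real.volume_real_Ico_of_le (by linarith), smul_eq_mul]
    have hrw : D n = (∑ i ∈ Finset.range n,
        ∫ t in Set.Ico (z n i) (z n (i+1)), (f θ (z n (i + 1)) - f θ t)) -
        ∫ t in Set.Ico (z n n) d, f θ t := by
      rw [hD, hsplit n]
      rw [← Finset.sum_congr rfl hterm, Finset.sum_sub_distrib]
      ring
    rw [hrw]
    refine (abs_sub _ _).trans ?_
    gcongr
    refine (Finset.abs_sum_le_sum_abs _ _).trans ?_
    apply Finset.sum_le_sum
    intro i hi
    rw [Finset.mem_range] at hi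
    have h2 : z n i ≤ z n (i+1) := hzmono n i hi
    have hmem : Set.Ico (z n i) (z n (i+1)) ⊆ Set.Ico c d := hIsub n i (i+1) (by omega) (by omega)
    have := norm_setIntegral_le_of_norm_le_const (μ := volume)
      (s := Set.Ico (z n i) (z n (i+1)))
      (f := fun t => f θ (z n (i + 1)) - f θ t) (C := ωf (z n (i + 1) - z n i))
      (by rw [Real.volume_Ico]; exact ENNReal.ofReal_lt_top)
      (by
        intro t ht
        rw [Real.norm_eq_abs]
        refine hω _ ?_ _ (hmem ht) _ ?_
        · exact Set.mem_Ico.mpr ⟨hzc n (i+1) (by omega), hzd n (i+1) (by omega)⟩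
        · obtain ⟨ht1, ht2⟩ := ht
          rw [abs_sub_comm, abs_of_nonpos (by linarith)]
          linarith)
    rw [Real.norm_eq_abs, Real.volume_real_Ico_of_le (by linarith)] at this
    exact this
  -- limit of the deterministic error
  have hq0 : (0:ℝ) ≤ q := by positivity
  have hαq : ∀ n, (0:ℝ) ≤ αn n ^ q := fun n => Real.rpow_nonneg (hαpos n).le _
  have hDtend : Tendsto (fun n => αn n ^ q * |D n|) atTop (nhds 0) := by
    have hu : Tendsto (fun n => αn n ^ q * (∑ i ∈ Finset.range n,
        ωf (z n (i + 1) - z n i) * (z n (i + 1) - z n i)) +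
        |αn n ^ q * ∫ t in Set.Ico (z n n) d, f θ t|) atTop (nhds 0) := by
      have := hωsum.add htail.abs
      simpa using this
    refine squeeze_zero (fun n => mul_nonneg (hαq n) (abs_nonneg _)) (fun n => ?_) hu
    rw [abs_mul, abs_of_nonneg (hαq _)]
    calc αn n ^ q * |D n| ≤ αn n ^ q * ((∑ i ∈ Finset.range n,
          ωf (z n (i + 1) - z n i) * (z n (i + 1) - z n i)) +
          |∫ t in Set.Ico (z n n) d, f θ t|) := by
          exact mul_le_mul_of_nonneg_left (hDbound n) (hαq n)
      _ = _ := by ring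
  set η : ℝ := (e / K) ^ q with hη
  have hηpos : 0 < η := Real.rpow_pos_of_pos (div_pos he hK) _
  -- the random part
  set R : ℕ → Ω → ℝ := fun n ω => ∑ i ∈ Finset.range n,
      (z n (i + 1) - z n i) * ε n (i + 1) ω with hR
  -- event inclusion
  have hS : ∀ n ω, (∑ i ∈ Finset.range n,
      (z n (i + 1) - z n i) * (f θ (z n (i + 1)) + ε n (i + 1) ω)) - T θ = D n + R n ω := by
    intro n ω
    rw [hD, hR, hTθ]
    simp only [mul_add, Finset.sum_add_distrib]
    ring
  have hincl : ∀ n ω, e ≤ |αn n * (Tinv (∑ i ∈ Finset.range n,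
      (z n (i + 1) - z n i) * (f θ (z n (i + 1)) + ε n (i + 1) ω)) - θ)| →
      η ≤ αn n ^ q * |D n| + αn n ^ q * |R n ω| := by
    intro n ω hev
    set S := ∑ i ∈ Finset.range n,
      (z n (i + 1) - z n i) * (f θ (z n (i + 1)) + ε n (i + 1) ω) with hSdef
    have h1 : e ≤ αn n * (K * |S - T θ| ^ p) := by
      calc e ≤ |αn n * (Tinv S - θ)| := hev
        _ = αn n * |Tinv S - Tinv (T θ)| := by
            rw [abs_mul, abs_of_pos (hαpos n), hTinvT]
        _ ≤ αn n * (K * |S - T θ| ^ p) :=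
            mul_le_mul_of_nonneg_left (hHolder S (T θ)) (hαpos n).le
    have h2 : e / K ≤ αn n * |S - T θ| ^ p := by
      rw [div_le_iff₀ hK] at *
      nlinarith [h1]
    have hqp : (αn n ^ q) ^ p = αn n := by
      rw [← Real.rpow_mul (hαpos n).le, hq, one_div, inv_mul_cancel₀ (ne_of_gt hp0),
        Real.rpow_one]
    have h3 : αn n * |S - T θ| ^ p = (αn n ^ q * |S - T θ|) ^ p := by
      rw [Real.mul_rpow (hαq n) (abs_nonneg _), hqp]
    have h4 : η ≤ αn n ^ q * |S - T θ| := by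
      have h5 : (e / K) ^ q ≤ ((αn n ^ q * |S - T θ|) ^ p) ^ q := by
        refine Real.rpow_le_rpow (div_pos he hK).le ?_ hq0
        rw [← h3]; exact h2
      rw [← Real.rpow_mul (mul_nonneg (hαq n) (abs_nonneg _)), hq, mul_one_div, div_self (ne_of_gt hp0),
        Real.rpow_one] at h5
      exact h5
    calc η ≤ αn n ^ q * |S - T θ| := h4
      _ = αn n ^ q * |D n + R n ω| := by rw [← hS n ω]
      _ ≤ αn n ^ q * (|D n| + |R n ω|) :=
          mul_le_mul_of_nonneg_left (abs_add_le _ _) (hαq n)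
      _ = _ := by ring
  -- Chebyshev
  have hRL2 : ∀ n, MemLp (fun ω => αn n ^ q * R n ω) 2 μ := by
    intro n
    have : (fun ω => αn n ^ q * R n ω) = fun ω => ∑ i ∈ Finset.range n,
        (αn n ^ q * (z n (i + 1) - z n i)) * ε n (i + 1) ω := by
      funext ω; rw [hR]; rw [Finset.mul_sum]
      exact Finset.sum_congr rfl fun i _ => by ring
    rw [this]
    exact memLp_finset_sum _ (fun i _ => ((hεL2 n (i+1)).const_mul _))
  have hRmean : ∀ n, ∫ ω, αn n ^ q * R n ω ∂μ = 0 := by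
    intro n
    rw [integral_const_mul]
    have : ∫ ω, R n ω ∂μ = ∑ i ∈ Finset.range n,
        (z n (i + 1) - z n i) * ∫ ω, ε n (i + 1) ω ∂μ := by
      rw [hR, integral_finset_sum _
        (fun i _ => ((hεL2 n (i+1)).integrable one_le_two).const_mul _)]
      simp_rw [integral_const_mul]
    rw [this]
    simp [hεmean]
  have hRvar : ∀ n, variance (fun ω => αn n ^ q * R n ω) μ =
      (αn n ^ q * Real.sqrt (∑ i ∈ Finset.range n,
        (z n (i + 1) - z n i) ^ 2 * ∫ ω, (ε n (i + 1) ω) ^ 2 ∂μ)) ^ 2 := by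
    intro n
    have hsum0 : (0:ℝ) ≤ ∑ i ∈ Finset.range n,
        (z n (i + 1) - z n i) ^ 2 * ∫ ω, (ε n (i + 1) ω) ^ 2 ∂μ := by
      refine Finset.sum_nonneg fun i _ => mul_nonneg (sq_nonneg _) ?_
      exact integral_nonneg (fun ω => sq_nonneg _)
    have hfun : (fun ω => αn n ^ q * R n ω) =
        ∑ i : Fin n, (αn n ^ q * (z n (i + 1) - z n i)) • ε n (i + 1) := by
      funext ω
      rw [hR, Finset.sum_apply, Finset.mul_sum]
      rw [Fin.sum_univ_eq_sum_range
        (fun i => ((αn n ^ q * (z n (i + 1) - z n i)) • ε n (i + 1)) ω)]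
      refine Finset.sum_congr rfl fun i _ => ?_
      simp [mul_assoc]
    rw [hfun]
    have hL2 : ∀ i ∈ (Finset.univ : Finset (Fin n)),
        MemLp ((αn n ^ q * (z n (i.1 + 1) - z n i.1)) • ε n (i.1 + 1)) 2 μ :=
      fun i _ => ((hεL2 n (i.1+1)).const_smul _)
    have hpw : Set.Pairwise (↑(Finset.univ : Finset (Fin n)) : Set (Fin n)) fun i j =>
        IndepFun ((αn n ^ q * (z n (i.1 + 1) - z n i.1)) • ε n (i.1 + 1))
          ((αn n ^ q * (z n (j.1 + 1) - z n j.1)) • ε n (j.1 + 1)) μ := by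
      intro i _ j _ hij
      have hcomp := ((hεindep n).indepFun hij).comp
        (measurable_const_mul (αn n ^ q * (z n (i.1 + 1) - z n i.1)))
        (measurable_const_mul (αn n ^ q * (z n (j.1 + 1) - z n j.1)))
      exact hcomp
    rw [IndepFun.variance_sum hL2 hpw]
    have hvar : ∀ i : Fin n, variance ((αn n ^ q * (z n (i.1 + 1) - z n i.1)) • ε n (i.1 + 1)) μ
        = (αn n ^ q * (z n (i.1 + 1) - z n i.1)) ^ 2 * ∫ ω, (ε n (i.1 + 1) ω) ^ 2 ∂μ := by
      intro i
      rw [variance_smul]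
      congr 1
      rw [variance_eq_sub (hεL2 n (i.1+1))]
      simp [hεmean n (i.1+1)]
    rw [Finset.sum_congr rfl (fun i _ => hvar i)]
    rw [mul_pow, Real.sq_sqrt hsum0, Finset.mul_sum]
    rw [Fin.sum_univ_eq_sum_range
      (fun i => (αn n ^ q * (z n (i + 1) - z n i)) ^ 2 * ∫ ω, (ε n (i + 1) ω) ^ 2 ∂μ)]
    refine Finset.sum_congr rfl fun i _ => by ring
  -- final convergence
  have hvtend : Tendsto (fun n => (αn n ^ q * Real.sqrt (∑ i ∈ Finset.range n,
      (z n (i + 1) - z n i) ^ 2 * ∫ ω, (ε n (i + 1) ω) ^ 2 ∂μ)) ^ 2 / (η/2)^2)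
      atTop (nhds 0) := by
    have h1 := (hd2.pow 2).div_const ((η/2)^2)
    simpa using h1
  have hup : Tendsto (fun n => ENNReal.ofReal
      ((αn n ^ q * Real.sqrt (∑ i ∈ Finset.range n,
        (z n (i + 1) - z n i) ^ 2 * ∫ ω, (ε n (i + 1) ω) ^ 2 ∂μ)) ^ 2 / (η/2)^2))
      atTop (nhds 0) := by
    have h0 := ENNReal.tendsto_ofReal hvtend
    rwa [ENNReal.ofReal_zero] at h0
  refine tendsto_of_tendsto_of_tendsto_of_le_of_le'
    (tendsto_const_nhds (x := (0:ENNReal)) (f := atTop)) hup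
    (Eventually.of_forall fun n => zero_le) ?_
  have hev : ∀ᶠ n in atTop, αn n ^ q * |D n| < η / 2 :=
    hDtend.eventually_lt_const (by positivity)
  filter_upwards [hev] with n hn
  have hsubset : {ω : Ω | e ≤ |αn n * (Tinv (∑ i ∈ Finset.range n,
      (z n (i + 1) - z n i) * (f θ (z n (i + 1)) + ε n (i + 1) ω)) - θ)|} ⊆
      {ω : Ω | η/2 ≤ |(fun ω => αn n ^ q * R n ω) ω - μ[fun ω => αn n ^ q * R n ω]|} := by
    intro ω hω'
    have h1 := hincl n ω hω'
    simp only [Set.mem_setOf_eq]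
    rw [hRmean n, sub_zero, abs_mul, abs_of_nonneg (hαq n)]
    linarith
  calc μ _ ≤ μ {ω : Ω | η/2 ≤ |(fun ω => αn n ^ q * R n ω) ω
        - μ[fun ω => αn n ^ q * R n ω]|} := measure_mono hsubset
    _ ≤ ENNReal.ofReal (variance (fun ω => αn n ^ q * R n ω) μ / (η/2)^2) :=
        meas_ge_le_variance_div_sq (hRL2 n) (by positivity)
    _ = ENNReal.ofReal ((αn n ^ q * Real.sqrt (∑ i ∈ Finset.range n,
        (z n (i + 1) - z n i) ^ 2 * ∫ ω, (ε n (i + 1) ω) ^ 2 ∂μ)) ^ 2 / (η/2)^2) := by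
        rw [hRvar n]
end
end
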